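/- Let P be a probability distribution, Q another probability distribution absolutely continuous with respect to P, and α ∈ (0,1). Suppose S ≥ 0 with E_P[S] = 1 and Q(S ≥ 1/α) > 0. Define S'(y) = 1/α if S(y) ≥ 1/α and 0 otherwise. Then E_P[S'] ≤ 1 and Q(S' ≥ 1/α) = Q(S ≥ 1/α). Consequently the normalized all-or-nothing bet S'/E_P[S'] has expected value 1 under P and Q(S'/E_P[S'] ≥ 1/α) ≥ Q(S ≥ 1/α). -/

import Mathlib

open MeasureTheory

/-- Neyman–Pearson in betting form: replacing a bet `S` by the all-or-nothing
bet `S'` (pay `1/α` iff `S ≥ 1/α`) costs at most the same and, after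
normalization, has at least as large a probability under `Q` of multiplying
the capital by `1/α`. -/
theorem stmt_8 {Ω : Type*} [MeasurableSpace Ω] (P Q : Measure Ω)
    [IsProbabilityMeasure P] [IsProbabilityMeasure Q] (hac : Q ≪ P)
    (α : ℝ) (hα : α ∈ Set.Ioo (0 : ℝ) 1)
    (S : Ω → ℝ) (hSmeas : Measurable S) (hSnn : ∀ ω, 0 ≤ S ω)
    (hSint : Integrable S P) (hSexp : ∫ ω, S ω ∂P = 1)
    (hQpos : 0 < Q {ω | 1 / α ≤ S ω}) :
    (∫ ω, (if 1 / α ≤ S ω then 1 / α else 0 : ℝ) ∂P ≤ 1) ∧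
    (Q {ω | 1 / α ≤ (if 1 / α ≤ S ω then 1 / α else 0 : ℝ)} = Q {ω | 1 / α ≤ S ω}) ∧
    (∫ ω, (if 1 / α ≤ S ω then 1 / α else 0 : ℝ) /
        (∫ ω', (if 1 / α ≤ S ω' then 1 / α else 0 : ℝ) ∂P) ∂P = 1) ∧
    Q {ω | 1 / α ≤ S ω} ≤
      Q {ω | 1 / α ≤ (if 1 / α ≤ S ω then 1 / α else 0 : ℝ) /
        (∫ ω', (if 1 / α ≤ S ω' then 1 / α else 0 : ℝ) ∂P)} := by
  obtain ⟨hα0, hα1⟩ := hα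
  have hαinv : (0:ℝ) < 1 / α := by positivity
  set A : Set Ω := {ω | 1 / α ≤ S ω} with hAdef
  have hAmeas : MeasurableSet A := measurableSet_le measurable_const hSmeas
  -- S' as indicator
  have hfun : (fun ω => (if 1 / α ≤ S ω then 1 / α else 0 : ℝ)) =
      A.indicator (fun _ => 1 / α) := by
    funext ω
    by_cases h : 1 / α ≤ S ω
    · simp [Set.indicator, hAdef, h]
    · simp [Set.indicator, hAdef, h]
  have hint' : Integrable (fun ω => (if 1 / α ≤ S ω then 1 / α else 0 : ℝ)) P := by
    rw [hfun]
    exact (integrable_const _).indicator hAmeas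
  have hle : ∀ ω, (if 1 / α ≤ S ω then 1 / α else 0 : ℝ) ≤ S ω := by
    intro ω
    by_cases h : 1 / α ≤ S ω
    · rw [if_pos h]; exact h
    · rw [if_neg h]; exact hSnn ω
  have h1 : ∫ ω, (if 1 / α ≤ S ω then 1 / α else 0 : ℝ) ∂P ≤ 1 := by
    calc ∫ ω, (if 1 / α ≤ S ω then 1 / α else 0 : ℝ) ∂P
        ≤ ∫ ω, S ω ∂P := integral_mono hint' hSint hle
      _ = 1 := hSexp
  -- the set equality
  have hset : {ω | 1 / α ≤ (if 1 / α ≤ S ω then 1 / α else 0 : ℝ)} = A := by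
    ext ω
    simp only [Set.mem_setOf_eq, hAdef]
    by_cases h : 1 / α ≤ S ω
    · rw [if_pos h]; exact iff_of_true le_rfl h
    · rw [if_neg h]; exact iff_of_false hαinv.not_ge h
  have h2 : Q {ω | 1 / α ≤ (if 1 / α ≤ S ω then 1 / α else 0 : ℝ)} = Q A := by
    rw [hset]
  -- positivity of c = ∫ S'
  set c : ℝ := ∫ ω', (if 1 / α ≤ S ω' then 1 / α else 0 : ℝ) ∂P with hc
  have hPA : 0 < P A := by
    rcases eq_or_lt_of_le (zero_le : 0 ≤ P A) with h | h
    · exact absurd (hac h.symm) hQpos.ne'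
    · exact h
  have hcval : c = (1 / α) * (P A).toReal := by
    rw [hc, hfun, integral_indicator_const _ hAmeas]
    simp [mul_comm, measureReal_def]
  have hcpos : 0 < c := by
    rw [hcval]
    have : 0 < (P A).toReal := ENNReal.toReal_pos hPA.ne' (measure_ne_top P A)
    positivity
  have h3 : ∫ ω, (if 1 / α ≤ S ω then 1 / α else 0 : ℝ) / c ∂P = 1 := by
    rw [integral_div, ← hc, div_self hcpos.ne']
  -- A ⊆ normalized set
  have hsub : A ⊆ {ω | 1 / α ≤ (if 1 / α ≤ S ω then 1 / α else 0 : ℝ) / c} := by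
    intro ω hω
    have hω' : 1 / α ≤ S ω := hω
    simp only [Set.mem_setOf_eq, if_pos hω']
    rw [le_div_iff₀ hcpos]
    calc (1 / α) * c ≤ (1 / α) * 1 := by
          exact mul_le_mul_of_nonneg_left h1 hαinv.le
      _ = 1 / α := mul_one _
  exact ⟨h1, h2, h3, measure_mono hsub⟩
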